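/- Let λ be a partition, let i ≥ 1 satisfy i = 1 or λ_i < λ_{i−1} (so that λ+1_i is a partition), and let L be any integer with L ≥ i and L ≥ ℓ(λ). Then c'_{λ+1_i} = c'_λ · (1−q^{λ_i+1} t^{L−i}) · ∏_{j=1}^{i−1} (1−q^{λ_j−λ_i} t^{i−j})/(1−q^{λ_j−λ_i} t^{i−j−1}) · ∏_{j=i+1}^{L} (1−q^{λ_i−λ_j+1} t^{j−i−1})/(1−q^{λ_i−λ_j+1} t^{j−i}), provided all factors occurring in denominators are nonzero; in particular the right-hand side does not depend on the choice of L. -/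

import Mathlib

open Finset

noncomputable section

/-- The conjugate partition value `λ'_j`, computed using rows `1,…,L`
(correct whenever `L ≥ ℓ(λ)`). -/
def conjP (lam : ℕ → ℕ) (L j : ℕ) : ℕ :=
  ((Finset.Icc 1 L).filter (fun k => j ≤ lam k)).card

/-- `c'_λ = ∏_{s∈λ} (1 - q^{a_λ(s)+1} t^{l_λ(s)})`, computed using rows `1,…,L`. -/
def cP' {K : Type*} [Field K] (q t : K) (lam : ℕ → ℕ) (L : ℕ) : K :=
  ∏ i ∈ Finset.Icc 1 L, ∏ j ∈ Finset.Icc 1 (lam i),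
    (1 - q ^ ((lam i : ℤ) - (j : ℤ) + 1) * t ^ ((conjP lam L j : ℤ) - (i : ℤ)))

lemma conjP_full (lam : ℕ → ℕ) (M c : ℕ) (h : ∀ k, 1 ≤ k → k ≤ M → c ≤ lam k) :
    conjP lam M c = M := by
  unfold conjP
  rw [Finset.filter_true_of_mem (by simpa using h)]
  simp

lemma conjP_succ (lam : ℕ → ℕ) (M c : ℕ) :
    conjP lam (M+1) c = conjP lam M c + (if c ≤ lam (M+1) then 1 else 0) := by
  unfold conjP
  rw [show Icc 1 (M+1) = insert (M+1) (Icc 1 M) by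
    ext k; simp [Finset.mem_Icc]; omega]
  rw [Finset.filter_insert]
  split
  · rw [Finset.card_insert_of_notMem (by simp)]
  · simp

lemma prod_Ioc_shift {R : Type*} [CommMonoid R] (f : ℕ → R) (n : ℕ) :
    ∏ c ∈ Ioc 1 (n+1), f c = ∏ c ∈ Ioc 0 n, f (c+1) := by
  rw [← Finset.map_add_right_Ioc 0 n 1, Finset.prod_map]
  rfl

lemma geom2 {R : Type*} [CommRing R] (x y : R) (e : ℕ) (b : ℕ) :
    ∀ p : ℕ, p ≤ e →
    (1 - x^(e+1) * y^b) * ∏ c ∈ Ioc 0 p, (1 - x^(e-c+1) * y^b)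
    = (1 - x^(e-p+1) * y^b) * ∏ c ∈ Ioc 0 p, (1 - x^(e-c+2) * y^b) := by
  intro p
  induction p with
  | zero => simp
  | succ p ih =>
    intro hpe
    have hp : p ≤ e := by omega
    rw [Finset.prod_Ioc_succ_top (Nat.zero_le _),
        show Ioc 0 (p+1) = insert 1 (Ioc 1 (p+1)) by ext k; simp [Finset.mem_Ioc]; omega,
        Finset.prod_insert (by simp), prod_Ioc_shift]
    rw [show e - 1 + 2 = e + 1 by omega]
    have hre : ∀ c ∈ Ioc 0 p, (1 - x^(e-(c+1)+2) * y^b) = (1 - x^(e-c+1) * y^b) := by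
      intro c hc
      simp only [Finset.mem_Ioc] at hc
      congr 3
      omega
    rw [Finset.prod_congr rfl hre, show e - (p+1) + 1 = e - p by omega]
    ring

/-- Left side of the key single-row identity, with natural-number exponents. -/
def bigL {R : Type*} [CommRing R] (x y : R) (lam : ℕ → ℕ) (i M : ℕ) : R :=
  (1 - x) * ((∏ c ∈ Ioc 0 (lam i), (1 - x ^ (lam i - c + 2) * y ^ (conjP lam M c - i))) *
    ∏ j ∈ Ioc i M, (1 - x ^ (lam i - lam j + 1) * y ^ (j - i)))

def bigR {R : Type*} [CommRing R] (x y : R) (lam : ℕ → ℕ) (i M : ℕ) : R :=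
  (1 - x ^ (lam i + 1) * y ^ (M - i)) *
    ((∏ c ∈ Ioc 0 (lam i), (1 - x ^ (lam i - c + 1) * y ^ (conjP lam M c - i))) *
    ∏ j ∈ Ioc i M, (1 - x ^ (lam i - lam j + 1) * y ^ (j - i - 1)))

lemma claim_field {F : Type*} [Field F] (x y : F)
    (hxy : ∀ a b : ℕ, 1 ≤ a → (1:F) - x ^ a * y ^ b ≠ 0)
    (lam : ℕ → ℕ) (hmono : ∀ a b, 1 ≤ a → a ≤ b → lam b ≤ lam a)
    (i : ℕ) (hi : 1 ≤ i) :
    ∀ M, i ≤ M → bigL x y lam i M = bigR x y lam i M := by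
  intro M hM
  induction M, hM using Nat.le_induction with
  | base =>
    unfold bigL bigR
    rw [show Ioc i i = (∅ : Finset ℕ) by simp]
    have h1 : ∀ c ∈ Ioc 0 (lam i), (1 - x ^ (lam i - c + 2) * y ^ (conjP lam i c - i))
        = (1 - x ^ (lam i - c + 2) * y ^ (0:ℕ)) := by
      intro c hc
      simp only [Finset.mem_Ioc] at hc
      rw [conjP_full lam i c (fun k hk hki => le_trans hc.2 (hmono k i hk hki)), Nat.sub_self]
    have h2 : ∀ c ∈ Ioc 0 (lam i), (1 - x ^ (lam i - c + 1) * y ^ (conjP lam i c - i))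
        = (1 - x ^ (lam i - c + 1) * y ^ (0:ℕ)) := by
      intro c hc
      simp only [Finset.mem_Ioc] at hc
      rw [conjP_full lam i c (fun k hk hki => le_trans hc.2 (hmono k i hk hki)), Nat.sub_self]
    rw [Finset.prod_congr rfl h1, Finset.prod_congr rfl h2, Finset.prod_empty]
    have := geom2 x y (lam i) 0 (lam i) le_rfl
    simpa [Nat.sub_self] using this.symm
  | succ M hiM ih =>
    have hpm : lam (M+1) ≤ lam i := hmono i (M+1) hi (by omega)
    set m := lam i with hm
    set p := lam (M+1) with hp
    have h1' : ∀ c ∈ Ioc 0 p, (1 - x^(m-c+2) * y^(conjP lam (M+1) c - i))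
        = (1 - x^(m-c+2) * y^(M+1-i)) := by
      intro c hc
      simp only [Finset.mem_Ioc] at hc
      rw [conjP_full lam (M+1) c (fun k hk hkM => le_trans hc.2 (hmono k (M+1) hk hkM))]
    have h1c : ∀ c ∈ Ioc 0 p, (1 - x^(m-c+1) * y^(conjP lam (M+1) c - i))
        = (1 - x^(m-c+1) * y^(M+1-i)) := by
      intro c hc
      simp only [Finset.mem_Ioc] at hc
      rw [conjP_full lam (M+1) c (fun k hk hkM => le_trans hc.2 (hmono k (M+1) hk hkM))]
    have h2' : ∀ c ∈ Ioc p m, (1 - x^(m-c+2) * y^(conjP lam (M+1) c - i))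
        = (1 - x^(m-c+2) * y^(conjP lam M c - i)) := by
      intro c hc
      simp only [Finset.mem_Ioc] at hc
      rw [conjP_succ lam M c, if_neg (by omega)]
      norm_num
    have h2c : ∀ c ∈ Ioc p m, (1 - x^(m-c+1) * y^(conjP lam (M+1) c - i))
        = (1 - x^(m-c+1) * y^(conjP lam M c - i)) := by
      intro c hc
      simp only [Finset.mem_Ioc] at hc
      rw [conjP_succ lam M c, if_neg (by omega)]
      norm_num
    have h0' : ∀ c ∈ Ioc 0 p, (1 - x^(m-c+2) * y^(conjP lam M c - i))
        = (1 - x^(m-c+2) * y^(M-i)) := by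
      intro c hc
      simp only [Finset.mem_Ioc] at hc
      rw [conjP_full lam M c (fun k hk hkM => le_trans hc.2 (hmono k (M+1) hk (by omega)))]
    have h0c : ∀ c ∈ Ioc 0 p, (1 - x^(m-c+1) * y^(conjP lam M c - i))
        = (1 - x^(m-c+1) * y^(M-i)) := by
      intro c hc
      simp only [Finset.mem_Ioc] at hc
      rw [conjP_full lam M c (fun k hk hkM => le_trans hc.2 (hmono k (M+1) hk (by omega)))]
    have eL : bigL x y lam i (M+1) =
        (1-x) * (((∏ c ∈ Ioc 0 p, (1 - x^(m-c+2) * y^(M+1-i))) *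
          (∏ c ∈ Ioc p m, (1 - x^(m-c+2) * y^(conjP lam M c - i)))) *
          ((∏ j ∈ Ioc i M, (1 - x^(m - lam j + 1) * y^(j-i))) *
            (1 - x^(m-p+1) * y^(M+1-i)))) := by
      unfold bigL
      rw [← Finset.prod_Ioc_consecutive (fun c => (1 - x^(m-c+2) * y^(conjP lam (M+1) c - i)))
          (Nat.zero_le p) hpm,
        Finset.prod_Ioc_succ_top (by omega : i ≤ M),
        Finset.prod_congr rfl h1', Finset.prod_congr rfl h2']
    have eR : bigR x y lam i (M+1) =
        (1 - x^(m+1) * y^(M+1-i)) * (((∏ c ∈ Ioc 0 p, (1 - x^(m-c+1) * y^(M+1-i))) *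
          (∏ c ∈ Ioc p m, (1 - x^(m-c+1) * y^(conjP lam M c - i)))) *
          ((∏ j ∈ Ioc i M, (1 - x^(m - lam j + 1) * y^(j-i-1))) *
            (1 - x^(m-p+1) * y^(M-i)))) := by
      unfold bigR
      rw [← Finset.prod_Ioc_consecutive (fun c => (1 - x^(m-c+1) * y^(conjP lam (M+1) c - i)))
          (Nat.zero_le p) hpm,
        Finset.prod_Ioc_succ_top (by omega : i ≤ M),
        Finset.prod_congr rfl h1c, Finset.prod_congr rfl h2c,
        show M + 1 - i - 1 = M - i by omega]
    have eIL : bigL x y lam i M =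
        (1-x) * (((∏ c ∈ Ioc 0 p, (1 - x^(m-c+2) * y^(M-i))) *
          (∏ c ∈ Ioc p m, (1 - x^(m-c+2) * y^(conjP lam M c - i)))) *
          (∏ j ∈ Ioc i M, (1 - x^(m - lam j + 1) * y^(j-i)))) := by
      unfold bigL
      rw [← Finset.prod_Ioc_consecutive (fun c => (1 - x^(m-c+2) * y^(conjP lam M c - i)))
          (Nat.zero_le p) hpm,
        Finset.prod_congr rfl h0']
    have eIR : bigR x y lam i M =
        (1 - x^(m+1) * y^(M-i)) * (((∏ c ∈ Ioc 0 p, (1 - x^(m-c+1) * y^(M-i))) *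
          (∏ c ∈ Ioc p m, (1 - x^(m-c+1) * y^(conjP lam M c - i)))) *
          (∏ j ∈ Ioc i M, (1 - x^(m - lam j + 1) * y^(j-i-1)))) := by
      unfold bigR
      rw [← Finset.prod_Ioc_consecutive (fun c => (1 - x^(m-c+1) * y^(conjP lam M c - i)))
          (Nat.zero_le p) hpm,
        Finset.prod_congr rfl h0c]
    rw [eIL, eIR] at ih
    rw [eL, eR]
    set QA := ∏ c ∈ Ioc p m, (1 - x^(m-c+2) * y^(conjP lam M c - i)) with hQA
    set QC := ∏ c ∈ Ioc p m, (1 - x^(m-c+1) * y^(conjP lam M c - i)) with hQC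
    set B := ∏ j ∈ Ioc i M, (1 - x^(m - lam j + 1) * y^(j-i)) with hB
    set D := ∏ j ∈ Ioc i M, (1 - x^(m - lam j + 1) * y^(j-i-1)) with hD
    set A0 := ∏ c ∈ Ioc 0 p, (1 - x^(m-c+2) * y^(M-i)) with hA0
    set A1 := ∏ c ∈ Ioc 0 p, (1 - x^(m-c+2) * y^(M+1-i)) with hA1
    set C0 := ∏ c ∈ Ioc 0 p, (1 - x^(m-c+1) * y^(M-i)) with hC0
    set C1 := ∏ c ∈ Ioc 0 p, (1 - x^(m-c+1) * y^(M+1-i)) with hC1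
    have g1 := geom2 x y m (M-i) p hpm
    have g2 := geom2 x y m (M+1-i) p hpm
    rw [← hA0, ← hC0] at g1
    rw [← hA1, ← hC1] at g2
    have hA0ne : A0 ≠ 0 := by
      rw [hA0]
      exact Finset.prod_ne_zero_iff.mpr (fun c _ => hxy (m-c+2) (M-i) (by omega))
    have key : ((1-x) * (QA * B)) * A0 = ((1 - x^(m-p+1) * y^(M-i)) * (QC * D)) * A0 := by
      linear_combination ih + (QC * D) * g1
    have key2 := mul_right_cancel₀ hA0ne key
    linear_combination (A1 * (1 - x^(m-p+1) * y^(M+1-i))) * key2 -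
      (QC * D * (1 - x^(m-p+1) * y^(M-i))) * g2

lemma bigL_map {A R : Type*} [CommRing A] [CommRing R] (φ : A →+* R) (x y : A)
    (lam : ℕ → ℕ) (i M : ℕ) : φ (bigL x y lam i M) = bigL (φ x) (φ y) lam i M := by
  simp [bigL, map_prod]

lemma bigR_map {A R : Type*} [CommRing A] [CommRing R] (φ : A →+* R) (x y : A)
    (lam : ℕ → ℕ) (i M : ℕ) : φ (bigR x y lam i M) = bigR (φ x) (φ y) lam i M := by
  simp [bigR, map_prod]

lemma claim_ring {R : Type*} [CommRing R] (x y : R)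
    (lam : ℕ → ℕ) (hmono : ∀ a b, 1 ≤ a → a ≤ b → lam b ≤ lam a)
    (i : ℕ) (hi : 1 ≤ i) (M : ℕ) (hiM : i ≤ M) :
    bigL x y lam i M = bigR x y lam i M := by
  classical
  set P := MvPolynomial (Fin 2) ℤ
  set K0 := FractionRing P
  have hxy : ∀ a b : ℕ, 1 ≤ a →
      (1:K0) - (algebraMap P K0 (MvPolynomial.X 0)) ^ a *
        (algebraMap P K0 (MvPolynomial.X 1)) ^ b ≠ 0 := by
    intro a b ha
    have h1 : (1:K0) - (algebraMap P K0 (MvPolynomial.X 0)) ^ a *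
        (algebraMap P K0 (MvPolynomial.X 1)) ^ b
        = algebraMap P K0 (1 - (MvPolynomial.X 0) ^ a * (MvPolynomial.X 1) ^ b) := by
      simp
    rw [h1]
    intro h
    have h2 : (1 - (MvPolynomial.X 0 : P) ^ a * (MvPolynomial.X 1) ^ b) = 0 :=
      IsFractionRing.injective P K0 (by simpa using h)
    have h3 := congrArg MvPolynomial.constantCoeff h2
    simp [MvPolynomial.constantCoeff_X, zero_pow (by omega : a ≠ 0)] at h3
  have hP : bigL (MvPolynomial.X 0 : P) (MvPolynomial.X 1) lam i M
      = bigR (MvPolynomial.X 0 : P) (MvPolynomial.X 1) lam i M := by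
    apply IsFractionRing.injective P K0
    rw [bigL_map (algebraMap P K0), bigR_map (algebraMap P K0)]
    exact claim_field _ _ hxy lam hmono i hi M hiM
  have hφ := congrArg (MvPolynomial.eval₂Hom (Int.castRingHom R)
    (fun j : Fin 2 => if j = 0 then x else y)) hP
  rw [bigL_map, bigR_map] at hφ
  simpa using hφ

theorem stmt7 {K : Type*} [Field K] (q t : K) (hq : q ≠ 0) (ht : t ≠ 0)
    (lam : ℕ → ℕ) (L i : ℕ)
    (hmono : ∀ k, 1 ≤ k → lam (k + 1) ≤ lam k)
    (hL : ∀ k, L < k → lam k = 0)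
    (hi : 1 ≤ i) (hiL : i ≤ L)
    (hadd : i = 1 ∨ lam i < lam (i - 1))
    (mu : ℕ → ℕ) (hmu : mu = fun k => if k = i then lam i + 1 else lam k)
    (hden1 : ∀ j ∈ Finset.Icc 1 (i - 1),
      1 - q ^ ((lam j : ℤ) - (lam i : ℤ)) * t ^ ((i : ℤ) - (j : ℤ) - 1) ≠ 0)
    (hden2 : ∀ j ∈ Finset.Icc (i + 1) L,
      1 - q ^ ((lam i : ℤ) - (lam j : ℤ) + 1) * t ^ ((j : ℤ) - (i : ℤ)) ≠ 0) :
    cP' q t mu L =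
      cP' q t lam L *
        (1 - q ^ ((lam i : ℤ) + 1) * t ^ ((L : ℤ) - (i : ℤ))) *
        (∏ j ∈ Finset.Icc 1 (i - 1),
          (1 - q ^ ((lam j : ℤ) - (lam i : ℤ)) * t ^ ((i : ℤ) - (j : ℤ))) /
            (1 - q ^ ((lam j : ℤ) - (lam i : ℤ)) * t ^ ((i : ℤ) - (j : ℤ) - 1))) *
        ∏ j ∈ Finset.Icc (i + 1) L,
          (1 - q ^ ((lam i : ℤ) - (lam j : ℤ) + 1) * t ^ ((j : ℤ) - (i : ℤ) - 1)) /
            (1 - q ^ ((lam i : ℤ) - (lam j : ℤ) + 1) * t ^ ((j : ℤ) - (i : ℤ))) := by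
  classical
  have hmui : mu i = lam i + 1 := by rw [hmu]; simp
  have hmune : ∀ k, k ≠ i → mu k = lam k := by intro k hk; rw [hmu]; simp [hk]
  have lam_anti : ∀ a b, 1 ≤ a → a ≤ b → lam b ≤ lam a := by
    intro a b ha hab
    induction b, hab using Nat.le_induction with
    | base => exact le_rfl
    | succ b hab ih => exact le_trans (hmono b (by omega)) ih
  have hup : ∀ k, 1 ≤ k → k ≤ i - 1 → lam i + 1 ≤ lam k := by
    intro k hk hki
    rcases hadd with h1 | h1
    · omega
    · have := lam_anti k (i-1) hk hki
      omega
  have hdown : ∀ k, i ≤ k → lam k ≤ lam i := fun k hk => lam_anti i k hi hk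
  -- conjugate facts
  have hconj_ne : ∀ c, c ≠ lam i + 1 → conjP mu L c = conjP lam L c := by
    intro c hc
    unfold conjP
    congr 1
    apply Finset.filter_congr
    intro k hk
    by_cases hki : k = i
    · subst hki
      rw [hmui]
      omega
    · rw [hmune k hki]
  have hconjmu : conjP mu L (lam i + 1) = i := by
    unfold conjP
    have : (Icc 1 L).filter (fun k => lam i + 1 ≤ mu k) = Icc 1 i := by
      ext k
      simp only [Finset.mem_filter, Finset.mem_Icc]
      constructor
      · rintro ⟨⟨h1, h2⟩, h3⟩
        refine ⟨h1, ?_⟩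
        by_contra hcon
        have hki : k ≠ i := by omega
        rw [hmune k hki] at h3
        have := hdown k (by omega)
        omega
      · rintro ⟨h1, h2⟩
        by_cases hki : k = i
        · subst hki
          exact ⟨⟨h1, hiL⟩, by rw [hmui]⟩
        · refine ⟨⟨h1, by omega⟩, ?_⟩
          rw [hmune k hki]
          exact hup k h1 (by omega)
    rw [this, Nat.card_Icc]
    omega
  have hconjlam : conjP lam L (lam i + 1) = i - 1 := by
    unfold conjP
    have : (Icc 1 L).filter (fun k => lam i + 1 ≤ lam k) = Icc 1 (i-1) := by
      ext k
      simp only [Finset.mem_filter, Finset.mem_Icc]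
      constructor
      · rintro ⟨⟨h1, h2⟩, h3⟩
        refine ⟨h1, ?_⟩
        by_contra hcon
        have := hdown k (by omega)
        omega
      · rintro ⟨h1, h2⟩
        exact ⟨⟨h1, by omega⟩, hup k h1 h2⟩
    rw [this, Nat.card_Icc]
    omega
  have hconj_ge : ∀ c, 1 ≤ c → c ≤ lam i → i ≤ conjP lam L c := by
    intro c h1 h2
    have hsub : Icc 1 i ⊆ (Icc 1 L).filter (fun k => c ≤ lam k) := by
      intro k hk
      simp only [Finset.mem_Icc] at hk
      simp only [Finset.mem_filter, Finset.mem_Icc]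
      exact ⟨⟨hk.1, le_trans hk.2 hiL⟩, le_trans h2 (lam_anti k i hk.1 hk.2)⟩
    have := Finset.card_le_card hsub
    simpa [conjP, Nat.card_Icc] using this
  -- splitting products over rows
  have hsplit : ∀ f : ℕ → K, ∏ r ∈ Icc 1 L, f r
      = ((∏ r ∈ Icc 1 (i-1), f r) * f i) * ∏ r ∈ Icc (i+1) L, f r := by
    intro f
    rw [show Icc 1 L = Ioc 0 L from Finset.Icc_add_one_left_eq_Ioc 0 L,
        show Icc 1 (i-1) = Ioc 0 (i-1) from Finset.Icc_add_one_left_eq_Ioc 0 (i-1),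
        show Icc (i+1) L = Ioc i L from Finset.Icc_add_one_left_eq_Ioc i L,
        ← Finset.prod_Ioc_consecutive f (Nat.zero_le (i-1)) (show i-1 ≤ L by omega),
        ← Finset.prod_Ioc_consecutive f (show i-1 ≤ i by omega) hiL,
        show Ioc (i-1) i = {i} from by ext k; simp only [Finset.mem_Ioc, Finset.mem_singleton]; omega,
        Finset.prod_singleton, mul_assoc]
  -- rows above i are unchanged
  have key3 : (∏ r ∈ Icc (i+1) L, ∏ c ∈ Icc 1 (mu r),
        (1 - q ^ ((mu r : ℤ) - (c:ℤ) + 1) * t ^ ((conjP mu L c : ℤ) - (r:ℤ))))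
      = ∏ r ∈ Icc (i+1) L, ∏ c ∈ Icc 1 (lam r),
        (1 - q ^ ((lam r : ℤ) - (c:ℤ) + 1) * t ^ ((conjP lam L c : ℤ) - (r:ℤ))) := by
    apply Finset.prod_congr rfl
    intro r hr
    simp only [Finset.mem_Icc] at hr
    rw [hmune r (by omega)]
    apply Finset.prod_congr rfl
    intro c hc
    simp only [Finset.mem_Icc] at hc
    have := hdown r (by omega)
    rw [hconj_ne c (by omega)]
  -- rows below i
  have key1 : (∏ r ∈ Icc 1 (i-1), ∏ c ∈ Icc 1 (mu r),
        (1 - q ^ ((mu r : ℤ) - (c:ℤ) + 1) * t ^ ((conjP mu L c : ℤ) - (r:ℤ)))) *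
      (∏ r ∈ Icc 1 (i-1), (1 - q ^ ((lam r : ℤ) - (lam i : ℤ)) * t ^ ((i : ℤ) - (r : ℤ) - 1)))
      = (∏ r ∈ Icc 1 (i-1), ∏ c ∈ Icc 1 (lam r),
        (1 - q ^ ((lam r : ℤ) - (c:ℤ) + 1) * t ^ ((conjP lam L c : ℤ) - (r:ℤ)))) *
      (∏ r ∈ Icc 1 (i-1), (1 - q ^ ((lam r : ℤ) - (lam i : ℤ)) * t ^ ((i : ℤ) - (r : ℤ)))) := by
    rw [← Finset.prod_mul_distrib, ← Finset.prod_mul_distrib]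
    apply Finset.prod_congr rfl
    intro r hr
    simp only [Finset.mem_Icc] at hr
    have hlr : lam i + 1 ≤ lam r := hup r hr.1 hr.2
    rw [hmune r (by omega)]
    have hmem : lam i + 1 ∈ Icc 1 (lam r) := by
      simp only [Finset.mem_Icc]
      omega
    rw [← Finset.mul_prod_erase (Icc 1 (lam r))
        (fun c => 1 - q ^ ((lam r:ℤ) - (c:ℤ) + 1) * t ^ ((conjP mu L c : ℤ) - (r:ℤ))) hmem,
      ← Finset.mul_prod_erase (Icc 1 (lam r))
        (fun c => 1 - q ^ ((lam r:ℤ) - (c:ℤ) + 1) * t ^ ((conjP lam L c : ℤ) - (r:ℤ))) hmem]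
    have herase : (∏ c ∈ (Icc 1 (lam r)).erase (lam i + 1),
          (1 - q ^ ((lam r:ℤ) - (c:ℤ) + 1) * t ^ ((conjP mu L c : ℤ) - (r:ℤ))))
        = ∏ c ∈ (Icc 1 (lam r)).erase (lam i + 1),
          (1 - q ^ ((lam r:ℤ) - (c:ℤ) + 1) * t ^ ((conjP lam L c : ℤ) - (r:ℤ))) := by
      apply Finset.prod_congr rfl
      intro c hc
      rw [hconj_ne c (Finset.ne_of_mem_erase hc)]
    rw [herase, hconjmu, hconjlam]
    rw [show ((lam r:ℤ) - ((lam i + 1 : ℕ):ℤ) + 1) = (lam r:ℤ) - (lam i:ℤ) by push_cast; ring,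
      show (((i - 1 : ℕ):ℤ) - (r:ℤ)) = (i:ℤ) - (r:ℤ) - 1 by omega]
    ring
  -- row i : the key identity
  have hcr := claim_ring q t lam lam_anti i hi L hiL
  unfold bigL bigR at hcr
  have eqRowmu : (∏ c ∈ Icc 1 (mu i),
        (1 - q ^ ((mu i : ℤ) - (c:ℤ) + 1) * t ^ ((conjP mu L c : ℤ) - (i:ℤ))))
      = (∏ c ∈ Ioc 0 (lam i),
          (1 - q ^ (lam i - c + 2) * t ^ (conjP lam L c - i))) * (1 - q) := by
    rw [hmui, show Icc 1 (lam i + 1) = Ioc 0 (lam i + 1) from Finset.Icc_add_one_left_eq_Ioc 0 _,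
      Finset.prod_Ioc_succ_top (Nat.zero_le _)]
    congr 1
    · apply Finset.prod_congr rfl
      intro c hc
      simp only [Finset.mem_Ioc] at hc
      rw [hconj_ne c (by omega)]
      rw [show ((lam i + 1 : ℕ):ℤ) - (c:ℤ) + 1 = ((lam i - c + 2 : ℕ):ℤ) by omega,
        show ((conjP lam L c : ℕ):ℤ) - (i:ℤ) = ((conjP lam L c - i : ℕ):ℤ) by
          have := hconj_ge c hc.1 hc.2; omega,
        zpow_natCast, zpow_natCast]
    · rw [hconjmu]
      rw [show ((lam i + 1 : ℕ):ℤ) - ((lam i + 1 : ℕ):ℤ) + 1 = (1:ℤ) by ring,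
        show ((i:ℕ):ℤ) - (i:ℤ) = (0:ℤ) by ring]
      norm_num
  have eqRowlam : (∏ c ∈ Icc 1 (lam i),
        (1 - q ^ ((lam i : ℤ) - (c:ℤ) + 1) * t ^ ((conjP lam L c : ℤ) - (i:ℤ))))
      = ∏ c ∈ Ioc 0 (lam i), (1 - q ^ (lam i - c + 1) * t ^ (conjP lam L c - i)) := by
    rw [show Icc 1 (lam i) = Ioc 0 (lam i) from Finset.Icc_add_one_left_eq_Ioc 0 _]
    apply Finset.prod_congr rfl
    intro c hc
    simp only [Finset.mem_Ioc] at hc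
    rw [show ((lam i:ℕ):ℤ) - (c:ℤ) + 1 = ((lam i - c + 1 : ℕ):ℤ) by omega,
      show ((conjP lam L c : ℕ):ℤ) - (i:ℤ) = ((conjP lam L c - i : ℕ):ℤ) by
        have := hconj_ge c hc.1 hc.2; omega,
      zpow_natCast, zpow_natCast]
  have eqD2 : (∏ j ∈ Icc (i+1) L,
        (1 - q ^ ((lam i : ℤ) - (lam j : ℤ) + 1) * t ^ ((j : ℤ) - (i : ℤ))))
      = ∏ j ∈ Ioc i L, (1 - q ^ (lam i - lam j + 1) * t ^ (j - i)) := by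
    rw [show Icc (i+1) L = Ioc i L from Finset.Icc_add_one_left_eq_Ioc i L]
    apply Finset.prod_congr rfl
    intro j hj
    simp only [Finset.mem_Ioc] at hj
    have := hdown j (by omega)
    rw [show ((lam i:ℕ):ℤ) - (lam j:ℤ) + 1 = ((lam i - lam j + 1 : ℕ):ℤ) by omega,
      show ((j:ℕ):ℤ) - (i:ℤ) = ((j - i : ℕ):ℤ) by omega,
      zpow_natCast, zpow_natCast]
  have eqN2 : (∏ j ∈ Icc (i+1) L,
        (1 - q ^ ((lam i : ℤ) - (lam j : ℤ) + 1) * t ^ ((j : ℤ) - (i : ℤ) - 1)))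
      = ∏ j ∈ Ioc i L, (1 - q ^ (lam i - lam j + 1) * t ^ (j - i - 1)) := by
    rw [show Icc (i+1) L = Ioc i L from Finset.Icc_add_one_left_eq_Ioc i L]
    apply Finset.prod_congr rfl
    intro j hj
    simp only [Finset.mem_Ioc] at hj
    have := hdown j (by omega)
    rw [show ((lam i:ℕ):ℤ) - (lam j:ℤ) + 1 = ((lam i - lam j + 1 : ℕ):ℤ) by omega,
      show ((j:ℕ):ℤ) - (i:ℤ) - 1 = ((j - i - 1 : ℕ):ℤ) by omega,
      zpow_natCast, zpow_natCast]
  have eqX1 : (1 - q ^ ((lam i : ℤ) + 1) * t ^ ((L : ℤ) - (i : ℤ)))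
      = 1 - q ^ (lam i + 1) * t ^ (L - i) := by
    rw [show ((lam i:ℕ):ℤ) + 1 = ((lam i + 1 : ℕ):ℤ) by omega,
      show ((L:ℕ):ℤ) - (i:ℤ) = ((L - i : ℕ):ℤ) by omega,
      zpow_natCast, zpow_natCast]
  have key2 : (∏ c ∈ Icc 1 (mu i),
        (1 - q ^ ((mu i : ℤ) - (c:ℤ) + 1) * t ^ ((conjP mu L c : ℤ) - (i:ℤ)))) *
      (∏ j ∈ Icc (i+1) L,
        (1 - q ^ ((lam i : ℤ) - (lam j : ℤ) + 1) * t ^ ((j : ℤ) - (i : ℤ))))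
      = (∏ c ∈ Icc 1 (lam i),
          (1 - q ^ ((lam i : ℤ) - (c:ℤ) + 1) * t ^ ((conjP lam L c : ℤ) - (i:ℤ)))) *
        ((1 - q ^ ((lam i : ℤ) + 1) * t ^ ((L : ℤ) - (i : ℤ))) *
          ∏ j ∈ Icc (i+1) L,
            (1 - q ^ ((lam i : ℤ) - (lam j : ℤ) + 1) * t ^ ((j : ℤ) - (i : ℤ) - 1))) := by
    rw [eqRowmu, eqRowlam, eqD2, eqN2, eqX1]
    linear_combination hcr
  -- assemble everything
  have hD1ne : (∏ j ∈ Icc 1 (i-1),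
      (1 - q ^ ((lam j : ℤ) - (lam i : ℤ)) * t ^ ((i : ℤ) - (j : ℤ) - 1))) ≠ 0 :=
    Finset.prod_ne_zero_iff.mpr hden1
  have hD2ne : (∏ j ∈ Icc (i+1) L,
      (1 - q ^ ((lam i : ℤ) - (lam j : ℤ) + 1) * t ^ ((j : ℤ) - (i : ℤ)))) ≠ 0 :=
    Finset.prod_ne_zero_iff.mpr hden2
  unfold cP'
  rw [hsplit, hsplit, key3, Finset.prod_div_distrib, Finset.prod_div_distrib]
  field_simp
  linear_combination ((∏ c ∈ Icc 1 (mu i),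
        (1 - q ^ ((mu i : ℤ) - (c:ℤ) + 1) * t ^ ((conjP mu L c : ℤ) - (i:ℤ)))) *
      (∏ r ∈ Icc (i+1) L, ∏ c ∈ Icc 1 (lam r),
        (1 - q ^ ((lam r : ℤ) - (c:ℤ) + 1) * t ^ ((conjP lam L c : ℤ) - (r:ℤ)))) *
      (∏ j ∈ Icc (i+1) L,
        (1 - q ^ ((lam i : ℤ) - (lam j : ℤ) + 1) * t ^ ((j : ℤ) - (i : ℤ))))) * key1 +
    ((∏ r ∈ Icc 1 (i-1), ∏ c ∈ Icc 1 (lam r),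
        (1 - q ^ ((lam r : ℤ) - (c:ℤ) + 1) * t ^ ((conjP lam L c : ℤ) - (r:ℤ)))) *
      (∏ r ∈ Icc 1 (i-1),
        (1 - q ^ ((lam r : ℤ) - (lam i : ℤ)) * t ^ ((i : ℤ) - (r : ℤ)))) *
      (∏ r ∈ Icc (i+1) L, ∏ c ∈ Icc 1 (lam r),
        (1 - q ^ ((lam r : ℤ) - (c:ℤ) + 1) * t ^ ((conjP lam L c : ℤ) - (r:ℤ))))) * key2

end
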